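/- Let P be a Poisson conformal superalgebra and let L be a parity-graded H-submodule of P closed under the λ-bracket, i.e., [L_λ L] ⊆ L[λ]. Then the map ρ̂_λ(a, x) = [a_λ x] + λ (a_λ x), for a ∈ L and x ∈ P, is a conformal representation of the Lie conformal superalgebra L on the H-module P. -/

import Mathlib

open Finsupp

noncomputable section

variable (k : Type) [Field k] [CharZero k]

section Base

variable {M N : Type} [AddCommGroup M] [Module k M] [AddCommGroup N] [Module k N]

/-- Multiplication by `λ` on `M[λ] := ℕ →₀ M`. -/
def lamMul : (ℕ →₀ M) →ₗ[k] (ℕ →₀ M) := Finsupp.lmapDomain M k Nat.succ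

/-- Apply a linear map to every coefficient of a polynomial. -/
def cw (f : M →ₗ[k] N) : (ℕ →₀ M) →ₗ[k] (ℕ →₀ N) := Finsupp.mapRange.linearMap f

/-- The constant-polynomial embedding `M → M[λ]`. -/
def cst : M →ₗ[k] (ℕ →₀ M) := Finsupp.lsingle 0

/-- Multiplication by `λ` on `M[λ,μ] := ℕ →₀ (ℕ →₀ M)` (outer variable `μ`, inner `λ`). -/
def lamMul2 : (ℕ →₀ (ℕ →₀ M)) →ₗ[k] (ℕ →₀ (ℕ →₀ M)) := cw k (lamMul k)

/-- Multiplication by `μ` on `M[λ,μ]`. -/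
def muMul2 : (ℕ →₀ (ℕ →₀ M)) →ₗ[k] (ℕ →₀ (ℕ →₀ M)) := Finsupp.lmapDomain (ℕ →₀ M) k Nat.succ

/-- The constant embedding `M → M[λ,μ]`. -/
def cst2 : M →ₗ[k] (ℕ →₀ (ℕ →₀ M)) := (cst k).comp (cst k)

/-- Interchange of the two variables of `M[λ,μ]`. -/
def swapVar : (ℕ →₀ (ℕ →₀ M)) →ₗ[k] (ℕ →₀ (ℕ →₀ M)) :=
  Finsupp.lsum k fun n => cw k (Finsupp.lsingle n)

/-- The substitution `λ ↦ -∂-λ` on `M[λ]`, where `∂` acts on `M` via `D`. -/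
def substNeg (D : M →ₗ[k] M) : (ℕ →₀ M) →ₗ[k] (ℕ →₀ M) :=
  Finsupp.lsum k fun n => ((-(cw k D) - lamMul k) ^ n) ∘ₗ cst k

/-- The substitution `ν ↦ λ+μ` from `M[ν]` to `M[λ,μ]`. -/
def substAdd : (ℕ →₀ M) →ₗ[k] (ℕ →₀ (ℕ →₀ M)) :=
  Finsupp.lsum k fun n => (((lamMul2 k + muMul2 k : (ℕ →₀ (ℕ →₀ M)) →ₗ[k] (ℕ →₀ (ℕ →₀ M)))) ^ n) ∘ₗ cst2 k

end Base
section Ops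

variable {A B C V W L P : Type} [AddCommGroup A] [Module k A] [AddCommGroup B] [Module k B]
  [AddCommGroup C] [Module k C] [AddCommGroup V] [Module k V] [AddCommGroup W] [Module k W]
  [AddCommGroup L] [Module k L] [AddCommGroup P] [Module k P]

/-- `P_λ(a, Q_μ(b, c))`, an element of `W[λ,μ]` (outer variable `μ`, inner `λ`). -/
def opComp (F : A →ₗ[k] C →ₗ[k] (ℕ →₀ W)) (G : B →ₗ[k] V →ₗ[k] (ℕ →₀ C))
    (a : A) (b : B) (c : V) : ℕ →₀ (ℕ →₀ W) := cw k (F a) (G b c)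

/-- `Q_μ(b, P_λ(a, c))`, an element of `W[λ,μ]` (outer variable `μ`, inner `λ`). -/
def opCompSwap (F : B →ₗ[k] C →ₗ[k] (ℕ →₀ W)) (G : A →ₗ[k] V →ₗ[k] (ℕ →₀ C))
    (b : B) (a : A) (c : V) : ℕ →₀ (ℕ →₀ W) := swapVar k (cw k (F b) (G a c))

/-- `Q_{λ+μ}(P_λ(a, b), c)`, an element of `W[λ,μ]` (outer variable `μ`, inner `λ`). -/
def opSubst (F : A →ₗ[k] B →ₗ[k] (ℕ →₀ C)) (G : C →ₗ[k] V →ₗ[k] (ℕ →₀ W))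
    (a : A) (b : B) (c : V) : ℕ →₀ (ℕ →₀ W) :=
  Finsupp.lsum k (fun n => ((lamMul2 k (M := W)) ^ n) ∘ₗ substAdd k) (cw k (G.flip c) (F a b))

end Ops

/-- The Koszul sign `(-1)^{|a||b|}` attached to parities `i`, `j`. -/
def sgn (i j : ZMod 2) : ℤ := if i = 1 ∧ j = 1 then -1 else 1

section Structures

variable {A B C L V P : Type} [AddCommGroup A] [Module k A] [AddCommGroup B] [Module k B]
  [AddCommGroup C] [Module k C]
  [AddCommGroup L] [Module k L] [AddCommGroup V] [Module k V] [AddCommGroup P] [Module k P]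

/-- A `ℤ₂`-graded module over `H = k[∂]`, where `∂` acts via `D`:
the two graded components are complementary and `∂`-invariant. -/
structure IsGradedHMod (D : L →ₗ[k] L) (par : ZMod 2 → Submodule k L) : Prop where
  sup_eq_top : par 0 ⊔ par 1 = ⊤
  inf_eq_bot : par 0 ⊓ par 1 = ⊥
  map_d : ∀ i a, a ∈ par i → D a ∈ par i

/-- Sesqui-linearity of a pairing `A ⊗ B → C[λ]` with respect to the `∂`-actions
`DA`, `DB`, `DC`: `F(∂a, b) = -λ F(a,b)` and `F(a, ∂b) = (∂+λ) F(a,b)`. -/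
structure IsSesqui (DA : A →ₗ[k] A) (DB : B →ₗ[k] B) (DC : C →ₗ[k] C)
    (F : A →ₗ[k] B →ₗ[k] (ℕ →₀ C)) : Prop where
  dleft : ∀ a b, F (DA a) b = -(lamMul k (F a b))
  dright : ∀ a b, F a (DB b) = cw k DC (F a b) + lamMul k (F a b)

/-- A Lie conformal superalgebra structure on the `H`-module `L` (with `∂` acting via `D`)
with `ℤ₂`-grading `par` and `λ`-bracket `Br`. -/
structure IsLieConfSuper (D : L →ₗ[k] L) (par : ZMod 2 → Submodule k L)
    (Br : L →ₗ[k] L →ₗ[k] (ℕ →₀ L)) : Prop where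
  graded : IsGradedHMod k D par
  sesqui : IsSesqui k D D D Br
  parity : ∀ i j a b, a ∈ par i → b ∈ par j → ∀ n, Br a b n ∈ par (i + j)
  skew : ∀ i j a b, a ∈ par i → b ∈ par j → Br a b = -(sgn i j • substNeg k D (Br b a))
  jacobi : ∀ i j a b c, a ∈ par i → b ∈ par j →
    opComp k Br Br a b c = opSubst k Br Br a b c + sgn i j • opCompSwap k Br Br b a c

/-- A Poisson conformal superalgebra structure on the `H`-module `P`, with `λ`-bracket `Br`
and conformally associative, supercommutative product `Ml`, linked by the conformal
Leibniz rule. -/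
structure IsPoissonConfSuper (D : P →ₗ[k] P) (par : ZMod 2 → Submodule k P)
    (Br Ml : P →ₗ[k] P →ₗ[k] (ℕ →₀ P)) : Prop where
  lie : IsLieConfSuper k D par Br
  mul_sesqui : IsSesqui k D D D Ml
  mul_parity : ∀ i j a b, a ∈ par i → b ∈ par j → ∀ n, Ml a b n ∈ par (i + j)
  assoc : ∀ a b c, opComp k Ml Ml a b c = opSubst k Ml Ml a b c
  comm : ∀ i j a b, a ∈ par i → b ∈ par j → Ml a b = sgn i j • substNeg k D (Ml b a)
  leibniz : ∀ i j a b c, a ∈ par i → b ∈ par j →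
    opComp k Br Ml a b c = opSubst k Br Ml a b c + sgn i j • opCompSwap k Ml Br b a c

/-- A conformal representation of the Lie conformal superalgebra `(L, D, par, Br)` on the
`ℤ₂`-graded `H`-module `(V, DV, parV)`. -/
structure IsConfRep (D : L →ₗ[k] L) (par : ZMod 2 → Submodule k L)
    (Br : L →ₗ[k] L →ₗ[k] (ℕ →₀ L)) (DV : V →ₗ[k] V) (parV : ZMod 2 → Submodule k V)
    (ρ : L →ₗ[k] V →ₗ[k] (ℕ →₀ V)) : Prop where
  sesqui : IsSesqui k D DV DV ρ
  parity : ∀ i j a x, a ∈ par i → x ∈ parV j → ∀ n, ρ a x n ∈ parV (i + j)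
  jacobi : ∀ i j a b x, a ∈ par i → b ∈ par j →
    opComp k ρ ρ a b x - sgn i j • opCompSwap k ρ ρ b a x = opSubst k Br ρ a b x

/-- Finiteness of an `H`-module: it is generated, as a `k[∂]`-module, by finitely
many elements. -/
def IsHFinite (DV : V →ₗ[k] V) : Prop :=
  ∃ s : Finset V, ∀ W : Submodule k V, (∀ x ∈ W, DV x ∈ W) → (↑s : Set V) ⊆ ↑W → W = ⊤

/-- The Lie conformal superalgebra `(L, D, par, Br)` admits a finite faithful conformal
representation. -/
def HasFFR (D : L →ₗ[k] L) (par : ZMod 2 → Submodule k L)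
    (Br : L →ₗ[k] L →ₗ[k] (ℕ →₀ L)) : Prop :=
  ∃ (V : Type) (_ : AddCommGroup V) (_ : Module k V) (DV : V →ₗ[k] V)
    (parV : ZMod 2 → Submodule k V) (ρ : L →ₗ[k] V →ₗ[k] (ℕ →₀ V)),
    IsGradedHMod k DV parV ∧ IsConfRep k D par Br DV parV ρ ∧ IsHFinite k DV ∧
      ∀ a : L, a ≠ 0 → ρ a ≠ 0

/-- `ρ` (defined on the ambient space `P`) restricts to a conformal representation of the
Lie conformal subalgebra `L ≤ P` (with ambient `λ`-bracket `Br`) on `(V, DV, parV)`. -/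
def IsConfRepOn (D : P →ₗ[k] P) (par : ZMod 2 → Submodule k P)
    (Br : P →ₗ[k] P →ₗ[k] (ℕ →₀ P)) (L : Submodule k P)
    (DV : V →ₗ[k] V) (parV : ZMod 2 → Submodule k V)
    (ρ : P →ₗ[k] V →ₗ[k] (ℕ →₀ V)) : Prop :=
  (∀ a ∈ L, ∀ x, ρ (D a) x = -(lamMul k (ρ a x))) ∧
  (∀ a ∈ L, ∀ x, ρ a (DV x) = cw k DV (ρ a x) + lamMul k (ρ a x)) ∧
  (∀ i j, ∀ a ∈ L ⊓ par i, ∀ x ∈ parV j, ∀ n, ρ a x n ∈ parV (i + j)) ∧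
  (∀ i j, ∀ a ∈ L ⊓ par i, ∀ b ∈ L ⊓ par j, ∀ x,
    opComp k ρ ρ a b x - sgn i j • opCompSwap k ρ ρ b a x = opSubst k Br ρ a b x)

end Structures
section Extension

variable {A B W V : Type} [AddCommGroup A] [Module k A] [AddCommGroup B] [Module k B]
  [AddCommGroup W] [Module k W] [AddCommGroup V] [Module k V]

/-- The sesqui-linear extension of a pairing `F : A ⊗ B → W[λ]` to a pairing
`(H ⊗ A) ⊗ (H ⊗ B) → W[λ]` (where `H ⊗ A` is realized as `ℕ →₀ A`, the index recording
the power of `∂`): `F(∂^n a, ∂^m b) = (-λ)^n (∂+λ)^m F(a, b)`, where `∂` acts on `W[λ]`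
coefficientwise via `DW`. -/
def extSesqui (DW : W →ₗ[k] W) (F : A →ₗ[k] B →ₗ[k] (ℕ →₀ W)) :
    (ℕ →₀ A) →ₗ[k] (ℕ →₀ B) →ₗ[k] (ℕ →₀ W) :=
  Finsupp.lsum k fun n =>
    (Finsupp.lsum (R := k) k).toLinearMap.comp <| LinearMap.pi fun m =>
      (LinearMap.llcomp k B (ℕ →₀ W) (ℕ →₀ W)
        (((-(lamMul k (M := W))) ^ n) * ((cw k DW + lamMul k) ^ m))).comp F

/-- The action of `∂` on `H ⊗ V`, realized as `ℕ →₀ V`. -/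
def DD (V : Type) [AddCommGroup V] [Module k V] : (ℕ →₀ V) →ₗ[k] (ℕ →₀ V) :=
  Finsupp.lmapDomain V k Nat.succ

/-- The canonical embedding `V → H ⊗ V`. -/
def emb (V : Type) [AddCommGroup V] [Module k V] : V →ₗ[k] (ℕ →₀ V) :=
  Finsupp.lsingle 0

/-- A grading of `V` lifts coefficientwise to a grading of `H ⊗ V = ℕ →₀ V`. -/
def liftPar {V : Type} [AddCommGroup V] [Module k V] (par : ZMod 2 → Submodule k V)
    (i : ZMod 2) : Submodule k (ℕ →₀ V) where
  carrier := { f | ∀ n, f n ∈ par i }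
  add_mem' := fun hf hg n => by
    simpa only [Finsupp.add_apply] using add_mem (hf n) (hg n)
  zero_mem' := fun n => by simp
  smul_mem' := fun c f hf n => by
    simpa only [Finsupp.smul_apply] using Submodule.smul_mem _ c (hf n)

end Extension

section Super

variable (p : Type) [NonUnitalRing p] [Module k p] [SMulCommClass k p p] [IsScalarTower k p p]

/-- An (ordinary) Poisson superalgebra structure on the `ℤ₂`-graded associative
supercommutative algebra `p`, with super Lie bracket `br`. -/
structure IsPoissonSuper (par : ZMod 2 → Submodule k p) (br : p →ₗ[k] p →ₗ[k] p) : Prop where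
  sup_eq_top : par 0 ⊔ par 1 = ⊤
  inf_eq_bot : par 0 ⊓ par 1 = ⊥
  mul_mem : ∀ i j (a b : p), a ∈ par i → b ∈ par j → a * b ∈ par (i + j)
  mul_scomm : ∀ i j (a b : p), a ∈ par i → b ∈ par j → a * b = sgn i j • (b * a)
  br_mem : ∀ i j a b, a ∈ par i → b ∈ par j → br a b ∈ par (i + j)
  br_skew : ∀ i j a b, a ∈ par i → b ∈ par j → br a b = -(sgn i j • br b a)
  br_jacobi : ∀ i j a b c, a ∈ par i → b ∈ par j →
    br a (br b c) = br (br a b) c + sgn i j • br b (br a c)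
  leibniz : ∀ i j a b c, a ∈ par i → b ∈ par j →
    br a (b * c) = br a b * c + sgn i j • (b * br a c)

/-- An even derivation of the Poisson superalgebra `(p, par, br)`. -/
structure IsEvenDerivation (par : ZMod 2 → Submodule k p) (br : p →ₗ[k] p →ₗ[k] p)
    (d : p →ₗ[k] p) : Prop where
  even : ∀ i a, a ∈ par i → d a ∈ par i
  map_mul : ∀ a b, d (a * b) = d a * b + a * d b
  map_br : ∀ a b, d (br a b) = br (d a) b + br a (d b)

/-- Base pairing `a ⊗ b ↦ a b` (constant in `λ`) for the current/quadratic constructions. -/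
def curMul0 : p →ₗ[k] p →ₗ[k] (ℕ →₀ (ℕ →₀ p)) :=
  (LinearMap.mul k p).compr₂ ((cst k).comp (emb k p))

/-- Base pairing `a ⊗ b ↦ {a, b}` (constant in `λ`) for the current construction. -/
def curBr0 (br : p →ₗ[k] p →ₗ[k] p) : p →ₗ[k] p →ₗ[k] (ℕ →₀ (ℕ →₀ p)) :=
  br.compr₂ ((cst k).comp (emb k p))

/-- Base pairing `a ⊗ b ↦ {a, b} + ∂ (d a · b) + λ d(a b)` of the Poisson conformal
superalgebra `L(p, d)`. -/
def qua0 (br : p →ₗ[k] p →ₗ[k] p) (d : p →ₗ[k] p) : p →ₗ[k] p →ₗ[k] (ℕ →₀ (ℕ →₀ p)) :=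
  br.compr₂ ((cst k).comp (emb k p))
    + ((LinearMap.mul k p).comp d).compr₂ ((cst k).comp ((DD k p).comp (emb k p)))
    + ((LinearMap.mul k p).compr₂ d).compr₂ ((lamMul k).comp ((cst k).comp (emb k p)))

/-- The multiplication `(a ∂^n)_λ (b ∂^m) = (-λ)^n (∂+λ)^m (a b)` on `H ⊗ p`. -/
def LpdMul : (ℕ →₀ p) →ₗ[k] (ℕ →₀ p) →ₗ[k] (ℕ →₀ (ℕ →₀ p)) :=
  extSesqui k (DD k p) (curMul0 k p)

/-- The `λ`-bracket of the current Poisson conformal superalgebra `Cur p`. -/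
def CurBr (br : p →ₗ[k] p →ₗ[k] p) : (ℕ →₀ p) →ₗ[k] (ℕ →₀ p) →ₗ[k] (ℕ →₀ (ℕ →₀ p)) :=
  extSesqui k (DD k p) (curBr0 k p br)

/-- The `λ`-bracket of the Poisson conformal superalgebra `L(p, d)`. -/
def LpdBr (br : p →ₗ[k] p →ₗ[k] p) (d : p →ₗ[k] p) :
    (ℕ →₀ p) →ₗ[k] (ℕ →₀ p) →ₗ[k] (ℕ →₀ (ℕ →₀ p)) :=
  extSesqui k (DD k p) (qua0 k p br d)

/-- The twisted action `ρ̂_λ(a, u) = [a_λ u] + λ (a_λ u)` on `L(p, d)`. -/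
def LpdRho (br : p →ₗ[k] p →ₗ[k] p) (d : p →ₗ[k] p) :
    (ℕ →₀ p) →ₗ[k] (ℕ →₀ p) →ₗ[k] (ℕ →₀ (ℕ →₀ p)) :=
  LpdBr k p br d + (LpdMul k p).compr₂ (lamMul k)

end Super
section TwistHelpers
set_option linter.unusedSectionVars false

variable {M N Q : Type} [AddCommGroup M] [Module k M] [AddCommGroup N] [Module k N]
  [AddCommGroup Q] [Module k Q]

lemma lamMul_single (n : ℕ) (m : M) :
    lamMul k (Finsupp.single n m) = Finsupp.single (n + 1) m := by
  simp [lamMul]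

lemma cw_single (f : M →ₗ[k] N) (n : ℕ) (m : M) :
    cw k f (Finsupp.single n m) = Finsupp.single n (f m) := by
  simp [cw]

lemma cw_lamMul (f : M →ₗ[k] N) (y : ℕ →₀ M) :
    cw k f (lamMul k y) = lamMul k (cw k f y) := by
  induction y using Finsupp.induction_linear with
  | zero => simp
  | add u v hu hv => simp [map_add, hu, hv]
  | single n m => rw [lamMul_single, cw_single, cw_single, lamMul_single]

lemma muMul2_def : (muMul2 k : (ℕ →₀ (ℕ →₀ M)) →ₗ[k] (ℕ →₀ (ℕ →₀ M))) = lamMul k := rfl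

lemma lamMul2_def : (lamMul2 k : (ℕ →₀ (ℕ →₀ M)) →ₗ[k] (ℕ →₀ (ℕ →₀ M))) = cw k (lamMul k) := rfl

lemma cw_add (f g : M →ₗ[k] N) (y : ℕ →₀ M) :
    cw k (f + g) y = cw k f y + cw k g y := by
  induction y using Finsupp.induction_linear with
  | zero => simp
  | add u v hu hv => simp only [map_add, hu, hv]; abel
  | single n m => simp [cw_single, Finsupp.single_add]

lemma cw_comp (f : M →ₗ[k] N) (g : N →ₗ[k] Q) (y : ℕ →₀ M) :
    cw k (g ∘ₗ f) y = cw k g (cw k f y) := by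
  induction y using Finsupp.induction_linear with
  | zero => simp
  | add u v hu hv => simp [map_add, hu, hv]
  | single n m => simp [cw_single]

lemma cst_def (m : M) : cst k m = Finsupp.single 0 m := rfl

lemma cst2_def (m : M) : cst2 k m = Finsupp.single 0 (Finsupp.single 0 m) := rfl

lemma swapVar_single (n m : ℕ) (v : M) :
    swapVar k (Finsupp.single n (Finsupp.single m v)) = Finsupp.single m (Finsupp.single n v) := by
  simp [swapVar, Finsupp.lsum_single, cw_single]

lemma swapVar_swapVar (y : ℕ →₀ (ℕ →₀ M)) : swapVar k (swapVar k y) = y := by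
  induction y using Finsupp.induction_linear with
  | zero => simp
  | add u v hu hv => simp [map_add, hu, hv]
  | single n g =>
    induction g using Finsupp.induction_linear with
    | zero => simp
    | add u v hu hv => simp only [Finsupp.single_add, map_add, hu, hv]
    | single m v => rw [swapVar_single, swapVar_single]

lemma muMul2_single (n : ℕ) (g : ℕ →₀ M) :
    muMul2 k (Finsupp.single n g) = Finsupp.single (n + 1) g := by
  simp [muMul2]

lemma lamMul2_single (n : ℕ) (g : ℕ →₀ M) :
    lamMul2 k (Finsupp.single n g) = Finsupp.single n (lamMul k g) := by
  rw [lamMul2_def, cw_single]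

lemma swapVar_lamMul2 (y : ℕ →₀ (ℕ →₀ M)) :
    swapVar k (lamMul2 k y) = muMul2 k (swapVar k y) := by
  induction y using Finsupp.induction_linear with
  | zero => simp
  | add u v hu hv => simp [map_add, hu, hv]
  | single n g =>
    induction g using Finsupp.induction_linear with
    | zero => simp
    | add u v hu hv => simp only [Finsupp.single_add, map_add, hu, hv]
    | single m v =>
      rw [lamMul2_single, lamMul_single, swapVar_single, swapVar_single, muMul2_single]

lemma swapVar_muMul2 (y : ℕ →₀ (ℕ →₀ M)) :
    swapVar k (muMul2 k y) = lamMul2 k (swapVar k y) := by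
  induction y using Finsupp.induction_linear with
  | zero => simp
  | add u v hu hv => simp [map_add, hu, hv]
  | single n g =>
    induction g using Finsupp.induction_linear with
    | zero => simp
    | add u v hu hv => simp only [Finsupp.single_add, map_add, hu, hv]
    | single m v =>
      rw [muMul2_single, swapVar_single, swapVar_single, lamMul2_single, lamMul_single]

lemma lamMul2_muMul2 (y : ℕ →₀ (ℕ →₀ M)) :
    lamMul2 k (muMul2 k y) = muMul2 k (lamMul2 k y) := by
  rw [lamMul2_def, muMul2_def, cw_lamMul]

lemma substAdd_single (n : ℕ) (m : M) :
    substAdd k (Finsupp.single n m) = (((lamMul2 k + muMul2 k : (ℕ →₀ (ℕ →₀ M)) →ₗ[k] (ℕ →₀ (ℕ →₀ M)))) ^ n) (cst2 k m) := by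
  simp [substAdd, Finsupp.lsum_single]

lemma substAdd_lamMul (y : ℕ →₀ M) :
    substAdd k (lamMul k y) = ((lamMul2 k + muMul2 k : (ℕ →₀ (ℕ →₀ M)) →ₗ[k] (ℕ →₀ (ℕ →₀ M)))) (substAdd k y) := by
  induction y using Finsupp.induction_linear with
  | zero => simp
  | add u v hu hv => simp [map_add, hu, hv]
  | single n m =>
    rw [lamMul_single, substAdd_single, substAdd_single, pow_succ', Module.End.mul_apply]

lemma lamMul2_pow_add_comm (n : ℕ) (z : ℕ →₀ (ℕ →₀ M)) :
    ((lamMul2 k) ^ n) (((lamMul2 k + muMul2 k : (ℕ →₀ (ℕ →₀ M)) →ₗ[k] (ℕ →₀ (ℕ →₀ M)))) z)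
      = ((lamMul2 k + muMul2 k : (ℕ →₀ (ℕ →₀ M)) →ₗ[k] (ℕ →₀ (ℕ →₀ M)))) (((lamMul2 k) ^ n) z) := by
  induction n with
  | zero => simp
  | succ n ih =>
    rw [pow_succ', Module.End.mul_apply, Module.End.mul_apply, ih, LinearMap.add_apply,
      LinearMap.add_apply, map_add, lamMul2_muMul2]

lemma swapVar_addpow (n : ℕ) (z : ℕ →₀ (ℕ →₀ M)) :
    swapVar k ((((lamMul2 k + muMul2 k : (ℕ →₀ (ℕ →₀ M)) →ₗ[k] (ℕ →₀ (ℕ →₀ M)))) ^ n) z)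
      = (((lamMul2 k + muMul2 k : (ℕ →₀ (ℕ →₀ M)) →ₗ[k] (ℕ →₀ (ℕ →₀ M)))) ^ n) (swapVar k z) := by
  induction n with
  | zero => simp
  | succ n ih =>
    rw [pow_succ', Module.End.mul_apply, Module.End.mul_apply, LinearMap.add_apply,
      LinearMap.add_apply, map_add, swapVar_lamMul2, swapVar_muMul2, ih]
    abel

lemma swapVar_mupow (n : ℕ) (z : ℕ →₀ (ℕ →₀ M)) :
    swapVar k (((muMul2 k) ^ n) z) = ((lamMul2 k) ^ n) (swapVar k z) := by
  induction n with
  | zero => simp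
  | succ n ih =>
    rw [pow_succ', pow_succ', Module.End.mul_apply, Module.End.mul_apply, swapVar_muMul2, ih]

lemma swapVar_substAdd (y : ℕ →₀ M) : swapVar k (substAdd k y) = substAdd k y := by
  induction y using Finsupp.induction_linear with
  | zero => simp
  | add u v hu hv => simp [map_add, hu, hv]
  | single n m =>
    rw [substAdd_single, swapVar_addpow, cst2_def, swapVar_single]

/-- The substitution `ν ↦ λ+μ` summed against powers of `λ`, used in `opSubst`. -/
def TT : (ℕ →₀ (ℕ →₀ M)) →ₗ[k] (ℕ →₀ (ℕ →₀ M)) :=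
  Finsupp.lsum k fun n => ((lamMul2 k) ^ n) ∘ₗ substAdd k

lemma opSubst_eq {A B C V W : Type} [AddCommGroup A] [Module k A] [AddCommGroup B] [Module k B]
    [AddCommGroup C] [Module k C] [AddCommGroup V] [Module k V] [AddCommGroup W] [Module k W]
    (F : A →ₗ[k] B →ₗ[k] (ℕ →₀ C)) (G : C →ₗ[k] V →ₗ[k] (ℕ →₀ W))
    (a : A) (b : B) (c : V) :
    opSubst k F G a b c = TT k (cw k (G.flip c) (F a b)) := rfl

lemma TT_single (n : ℕ) (y : ℕ →₀ M) :
    TT k (Finsupp.single n y) = ((lamMul2 k) ^ n) (substAdd k y) := by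
  simp [TT, Finsupp.lsum_single]

lemma TT_mu (v : ℕ →₀ (ℕ →₀ M)) : TT k (muMul2 k v) = lamMul2 k (TT k v) := by
  induction v using Finsupp.induction_linear with
  | zero => simp
  | add u v hu hv => simp [map_add, hu, hv]
  | single n y =>
    rw [muMul2_single, TT_single, TT_single, pow_succ', Module.End.mul_apply]

lemma TT_lamMul2 (v : ℕ →₀ (ℕ →₀ M)) :
    TT k (lamMul2 k v) = ((lamMul2 k + muMul2 k : (ℕ →₀ (ℕ →₀ M)) →ₗ[k] (ℕ →₀ (ℕ →₀ M)))) (TT k v) := by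
  induction v using Finsupp.induction_linear with
  | zero => simp
  | add u v hu hv => simp [map_add, hu, hv]
  | single n y =>
    rw [lamMul2_single, TT_single, TT_single, substAdd_lamMul, lamMul2_pow_add_comm]

section KeyLemma

variable (D : N →ₗ[k] N) (g : N →ₗ[k] (ℕ →₀ M))

lemma cw_g_cwD (hg : ∀ y, g (D y) = -(lamMul k (g y))) (z : ℕ →₀ N) :
    cw k g (cw k D z) = -(lamMul2 k (cw k g z)) := by
  induction z using Finsupp.induction_linear with
  | zero => simp
  | add u v hu hv => simp only [map_add, hu, hv]; abel
  | single n y =>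
    rw [cw_single, cw_single, hg, cw_single, lamMul2_single, Finsupp.single_neg]

lemma S_step (hg : ∀ y, g (D y) = -(lamMul k (g y))) (z : ℕ →₀ N) :
    TT k (cw k g (((-(cw k D) - lamMul k : (ℕ →₀ N) →ₗ[k] (ℕ →₀ N))) z)) = muMul2 k (TT k (cw k g z)) := by
  have hz : ((-(cw k D) - lamMul k : (ℕ →₀ N) →ₗ[k] (ℕ →₀ N))) z = -(cw k D z) - lamMul k z := rfl
  rw [hz, map_sub, map_neg, cw_g_cwD k D g hg, cw_lamMul, neg_neg, map_sub, TT_lamMul2,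
    show lamMul k (cw k g z) = muMul2 k (cw k g z) from rfl, TT_mu, LinearMap.add_apply]
  abel

lemma S_pow (hg : ∀ y, g (D y) = -(lamMul k (g y))) (n : ℕ) (z : ℕ →₀ N) :
    TT k (cw k g ((((-(cw k D) - lamMul k : (ℕ →₀ N) →ₗ[k] (ℕ →₀ N))) ^ n) z)) = ((muMul2 k) ^ n) (TT k (cw k g z)) := by
  induction n with
  | zero => simp
  | succ n ih =>
    rw [pow_succ', pow_succ', Module.End.mul_apply, Module.End.mul_apply, S_step k D g hg, ih]

lemma key_swap_substNeg (hg : ∀ y, g (D y) = -(lamMul k (g y))) (w : ℕ →₀ N) :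
    swapVar k (TT k (cw k g (substNeg k D w))) = TT k (cw k g w) := by
  induction w using Finsupp.induction_linear with
  | zero => simp
  | add u v hu hv => simp [map_add, hu, hv]
  | single n y =>
    have h1 : substNeg k D (Finsupp.single n y)
        = (((-(cw k D) - lamMul k : (ℕ →₀ N) →ₗ[k] (ℕ →₀ N))) ^ n) (cst k y) := by
      simp [substNeg, Finsupp.lsum_single]
    rw [h1, S_pow k D g hg, cst_def, cw_single, TT_single, pow_zero, Module.End.one_apply,
      swapVar_mupow, swapVar_substAdd, cw_single, TT_single]

end KeyLemma

lemma sgn_comm (i j : ZMod 2) : sgn i j = sgn j i := by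
  by_cases h : i = 1 <;> by_cases h' : j = 1 <;> simp [sgn, h, h']

lemma sgn_cases (i j : ZMod 2) : sgn i j = 1 ∨ sgn i j = -1 := by
  unfold sgn; split
  · exact Or.inr rfl
  · exact Or.inl rfl

lemma sgn_smul_smul (i j : ZMod 2) (v : M) : sgn i j • sgn i j • v = v := by
  unfold sgn; split <;> simp

lemma opCompSwap_eq {A B C V W : Type} [AddCommGroup A] [Module k A] [AddCommGroup B] [Module k B]
    [AddCommGroup C] [Module k C] [AddCommGroup V] [Module k V] [AddCommGroup W] [Module k W]
    (F : B →ₗ[k] C →ₗ[k] (ℕ →₀ W)) (G : A →ₗ[k] V →ₗ[k] (ℕ →₀ C))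
    (b : B) (a : A) (c : V) :
    opCompSwap k F G b a c = swapVar k (opComp k F G b a c) := rfl

end TwistHelpers

section TwistExpand

variable {P : Type} [AddCommGroup P] [Module k P]

lemma twistE1 (Br Ml : P →ₗ[k] P →ₗ[k] (ℕ →₀ P)) (a b x : P) :
    opComp k (Br + Ml.compr₂ (lamMul k)) (Br + Ml.compr₂ (lamMul k)) a b x
      = opComp k Br Br a b x + lamMul2 k (opComp k Ml Br a b x)
        + muMul2 k (opComp k Br Ml a b x)
        + muMul2 k (lamMul2 k (opComp k Ml Ml a b x)) := by
  have hmap : (Br + Ml.compr₂ (lamMul k)) a = Br a + (lamMul k) ∘ₗ (Ml a) := by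
    ext y; simp [LinearMap.compr₂_apply]
  have happ : (Br + Ml.compr₂ (lamMul k)) b x = Br b x + lamMul k (Ml b x) := by
    simp [LinearMap.compr₂_apply]
  show cw k ((Br + Ml.compr₂ (lamMul k)) a) ((Br + Ml.compr₂ (lamMul k)) b x) = _
  rw [hmap, happ, map_add, cw_add, cw_add, cw_comp, cw_comp,
    cw_lamMul k (Br a), cw_lamMul k (Ml a), cw_lamMul k (lamMul k)]
  simp only [opComp, lamMul2_def, muMul2_def]
  abel

lemma twistE2 (Br Ml : P →ₗ[k] P →ₗ[k] (ℕ →₀ P)) (b a x : P) :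
    opCompSwap k (Br + Ml.compr₂ (lamMul k)) (Br + Ml.compr₂ (lamMul k)) b a x
      = opCompSwap k Br Br b a x + muMul2 k (opCompSwap k Ml Br b a x)
        + lamMul2 k (opCompSwap k Br Ml b a x)
        + lamMul2 k (muMul2 k (opCompSwap k Ml Ml b a x)) := by
  rw [opCompSwap_eq, twistE1 k Br Ml b a x]
  simp only [map_add, swapVar_lamMul2, swapVar_muMul2]
  simp only [opCompSwap, opComp]

lemma twistE3 (Br Ml : P →ₗ[k] P →ₗ[k] (ℕ →₀ P)) (a b x : P) :
    opSubst k Br (Br + Ml.compr₂ (lamMul k)) a b x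
      = opSubst k Br Br a b x + lamMul2 k (opSubst k Br Ml a b x)
        + muMul2 k (opSubst k Br Ml a b x) := by
  have hflip : (Br + Ml.compr₂ (lamMul k)).flip x
      = Br.flip x + (lamMul k) ∘ₗ (Ml.flip x) := by
    ext y; simp [LinearMap.compr₂_apply]
  rw [opSubst_eq, hflip, cw_add, cw_comp, map_add,
    show cw k (lamMul k) (cw k (Ml.flip x) (Br a b))
      = lamMul2 k (cw k (Ml.flip x) (Br a b)) from rfl,
    TT_lamMul2, LinearMap.add_apply, ← opSubst_eq k Br Br a b x,
    ← opSubst_eq k Br Ml a b x]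
  abel

end TwistExpand

/-- **Corollary (twisted representation).** Let `P` be a Poisson conformal superalgebra and
`L ≤ P` a parity-graded `H`-submodule closed under the `λ`-bracket. Then
`ρ̂_λ(a, x) = [a_λ x] + λ (a_λ x)` is a conformal representation of the Lie conformal
superalgebra `L` on the `H`-module `P`. -/
theorem twisted_representation
    (P : Type) [AddCommGroup P] [Module k P]
    (D : P →ₗ[k] P) (par : ZMod 2 → Submodule k P)
    (Br Ml : P →ₗ[k] P →ₗ[k] (ℕ →₀ P))
    (hP : IsPoissonConfSuper k D par Br Ml)
    (L : Submodule k P) (hLD : ∀ a ∈ L, D a ∈ L)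
    (hLgr : ∀ a ∈ L, ∃ a0 ∈ L ⊓ par 0, ∃ a1 ∈ L ⊓ par 1, a = a0 + a1)
    (hLcl : ∀ a ∈ L, ∀ b ∈ L, ∀ n, Br a b n ∈ L) :
    IsConfRepOn k D par Br L D par (Br + Ml.compr₂ (lamMul k)) := by
  obtain ⟨hlie, hmuls, hmulpar, hassoc, hcomm, hleib⟩ := hP
  refine ⟨?_, ?_, ?_, ?_⟩
  · intro a _ x
    simp only [LinearMap.add_apply, LinearMap.compr₂_apply]
    rw [hlie.sesqui.dleft, hmuls.dleft]
    simp only [map_neg, map_add]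
    abel
  · intro a _ x
    simp only [LinearMap.add_apply, LinearMap.compr₂_apply]
    rw [hlie.sesqui.dright, hmuls.dright]
    simp only [map_add, cw_lamMul]
    abel
  · intro i j a ha x hx n
    obtain ⟨haL, hai⟩ := Submodule.mem_inf.mp ha
    simp only [LinearMap.add_apply, LinearMap.compr₂_apply, Finsupp.add_apply]
    refine add_mem (hlie.parity i j a x hai hx n) ?_
    have hmd : lamMul k (Ml a x) = Finsupp.mapDomain Nat.succ (Ml a x) := by
      simp [lamMul]
    cases n with
    | zero =>
      have h0 : lamMul k (Ml a x) 0 = 0 := by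
        rw [hmd]
        refine Finsupp.mapDomain_notin_range _ _ ?_
        rintro ⟨n, hn⟩
        exact Nat.succ_ne_zero n hn
      rw [h0]; exact zero_mem _
    | succ m =>
      have h0 : lamMul k (Ml a x) (m + 1) = Ml a x m := by
        rw [hmd]
        exact Finsupp.mapDomain_apply Nat.succ_injective _ m
      rw [h0]; exact hmulpar i j a x hai hx m
  · intro i j a ha b hb x
    obtain ⟨haL, hai⟩ := Submodule.mem_inf.mp ha
    obtain ⟨hbL, hbj⟩ := Submodule.mem_inf.mp hb
    have hgMl : ∀ y, (Ml.flip x) (D y) = -(lamMul k ((Ml.flip x) y)) := fun y => by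
      simp only [LinearMap.flip_apply]; exact hmuls.dleft y x
    have hkey : ∀ w : ℕ →₀ P, swapVar k (TT k (cw k (Ml.flip x) (substNeg k D w)))
        = TT k (cw k (Ml.flip x) w) := key_swap_substNeg k D (Ml.flip x) hgMl
    have h1 := hlie.jacobi i j a b x hai hbj
    have h3 := hleib i j a b x hai hbj
    have hskew := hlie.skew j i b a hbj hai
    rw [← sgn_comm] at hskew
    have hcomm' := hcomm j i b a hbj hai
    rw [← sgn_comm] at hcomm'
    have hleib' := hleib j i b a x hbj hai
    rw [← sgn_comm] at hleib'
    have hsubst_ba : opSubst k Br Ml b a x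
        = -(sgn i j • (TT k (cw k (Ml.flip x) (substNeg k D (Br a b))))) := by
      rw [opSubst_eq, hskew]
      simp only [map_neg, map_zsmul]
    have hswap : opCompSwap k Br Ml b a x
        = -(sgn i j • opSubst k Br Ml a b x) + sgn i j • opComp k Ml Br a b x := by
      have e1 : opCompSwap k Br Ml b a x = swapVar k (opComp k Br Ml b a x) := rfl
      have e2 : opCompSwap k Ml Br a b x = swapVar k (opComp k Ml Br a b x) := rfl
      rw [e1, hleib', hsubst_ba, e2, map_add, map_neg, map_zsmul, map_zsmul, hkey,
        swapVar_swapVar, ← opSubst_eq k Br Ml a b x]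
    have h2 : opComp k Ml Br a b x
        = opSubst k Br Ml a b x + sgn i j • opCompSwap k Br Ml b a x := by
      rw [hswap, smul_add, smul_neg, sgn_smul_smul, sgn_smul_smul]
      abel
    have h4 : sgn i j • opCompSwap k Ml Ml b a x = opComp k Ml Ml a b x := by
      have e1 : opCompSwap k Ml Ml b a x = swapVar k (opComp k Ml Ml b a x) := rfl
      have e2 : opSubst k Ml Ml b a x = TT k (cw k (Ml.flip x) (Ml b a)) := rfl
      rw [e1, hassoc b a x, e2, hcomm', map_zsmul, map_zsmul, map_zsmul, hkey,
        ← opSubst_eq k Ml Ml a b x, ← hassoc a b x, sgn_smul_smul]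
    rw [twistE1, twistE2, twistE3, h1, h2, h3, ← h4]
    rcases sgn_cases i j with hs | hs <;>
      simp only [hs, one_smul, neg_one_zsmul, map_add, map_neg, smul_add, smul_neg,
        lamMul2_muMul2, neg_neg] <;>
      abel
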